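/- If G = ⟨g⟩ is a finite cyclic group of order n acting on a finitely generated free ℤ-module M, then the Herbrand quotient is multiplicative: for a short exact sequence 0 → M' → M → M'' → 0 of G-modules with all Tate cohomology groups finite, |Ĥ^0(M)|·|Ĥ^1(M')|·|Ĥ^1(M'')| = |Ĥ^1(M)|·|Ĥ^0(M')|·|Ĥ^0(M'')|. -/

import Mathlib

open Finset AddSubgroup

section TateDefs

variable {M : Type*} [AddCommGroup M]

/-- The norm element `1 + σ + ⋯ + σ^{n-1}` of a cyclic group of order `n` with
generator acting by `σ`. -/
def normMap (n : ℕ) (σ : AddMonoid.End M) : AddMonoid.End M := ∑ i ∈ range n, σ ^ i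

/-- Tate cohomology `Ĥ⁰` of a cyclic group of order `n` with generator acting by `σ`:
the fixed points `ker (1 - σ)` modulo the image of the norm map. -/
abbrev tateH0 (n : ℕ) (σ : AddMonoid.End M) : Type _ :=
  ((1 - σ : AddMonoid.End M) : M →+ M).ker ⧸
    (((normMap n σ : M →+ M).range).addSubgroupOf ((1 - σ : AddMonoid.End M) : M →+ M).ker)

/-- Tate cohomology `Ĥ¹` (= `Ĥ^{-1}`) of a cyclic group of order `n` with generator
acting by `σ`: the kernel of the norm map modulo the image of `1 - σ`. -/
abbrev tateH1 (n : ℕ) (σ : AddMonoid.End M) : Type _ :=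
  ((normMap n σ : M →+ M)).ker ⧸
    ((((1 - σ : AddMonoid.End M) : M →+ M).range).addSubgroupOf (normMap n σ : M →+ M).ker)

end TateDefs

section Hex

open Function QuotientAddGroup

/-- General "Tate-style" quotient: `ker a / (range b ⊓ ker a)`. -/
abbrev Hq {M : Type*} [AddCommGroup M] (a b : AddMonoid.End M) : Type _ :=
  (a : M →+ M).ker ⧸ (((b : M →+ M)).range.addSubgroupOf (a : M →+ M).ker)

variable {M₁ M₂ : Type*} [AddCommGroup M₁] [AddCommGroup M₂]

/-- Map on `Hq` induced by an equivariant map. -/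
def HqMap (a₁ b₁ : AddMonoid.End M₁) (a₂ b₂ : AddMonoid.End M₂) (g : M₁ →+ M₂)
    (ha : ∀ x, g (a₁ x) = a₂ (g x)) (hb : ∀ x, g (b₁ x) = b₂ (g x)) :
    Hq a₁ b₁ →+ Hq a₂ b₂ :=
  QuotientAddGroup.map _ _
    (((g.domRestrict (a₁ : M₁ →+ M₁).ker).codRestrict (a₂ : M₂ →+ M₂).ker (fun x => by
      have hx : a₁ (x : M₁) = 0 := x.2
      simp only [AddMonoidHom.restrict_apply, AddMonoidHom.mem_ker]
      show a₂ (g x) = 0; rw [← ha, hx, map_zero])))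
    (by
      rintro ⟨x, hx⟩ hmem
      rw [mem_addSubgroupOf] at hmem
      obtain ⟨y, hy⟩ := hmem
      simp only [AddSubgroup.mem_comap, mem_addSubgroupOf, AddMonoidHom.codRestrict_apply,
        AddMonoidHom.restrict_apply, AddMonoidHom.mem_range]
      exact ⟨g y, by show b₂ (g y) = g x; rw [← hb]; exact congrArg g hy⟩)

lemma HqMap_mk (a₁ b₁ : AddMonoid.End M₁) (a₂ b₂ : AddMonoid.End M₂) (g : M₁ →+ M₂)
    (ha : ∀ x, g (a₁ x) = a₂ (g x)) (hb : ∀ x, g (b₁ x) = b₂ (g x))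
    (x : (a₁ : M₁ →+ M₁).ker) :
    HqMap a₁ b₁ a₂ b₂ g ha hb (QuotientAddGroup.mk x)
      = QuotientAddGroup.mk ⟨g x, by
          have hx : a₁ (x : M₁) = 0 := x.2
          show a₂ (g x) = 0; rw [← ha, hx, map_zero]⟩ := rfl

section Connecting

variable {M' M M'' : Type*} [AddCommGroup M'] [AddCommGroup M] [AddCommGroup M'']

lemma delta_mem_ker {a b : AddMonoid.End M} {b' : AddMonoid.End M'} {f : M' →+ M}
    (hf : Function.Injective f) (hfb : ∀ x, f (b' x) = b (f x))
    (hba : ∀ x, b (a x) = 0) {x : M} {y' : M'} (hy : f y' = a x) : b' y' = 0 := by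
  apply hf
  rw [hfb, hy, hba, map_zero]

lemma delta_lift_mem {a : AddMonoid.End M} {a'' : AddMonoid.End M''}
    {f : M' →+ M} {p : M →+ M''} (hexact : f.range = p.ker)
    (hpa : ∀ x, p (a x) = a'' (p x))
    (x'' : (a'' : M'' →+ M'').ker) {x : M} (hx : p x = (x'' : M'')) :
    a x ∈ f.range := by
  rw [hexact, AddMonoidHom.mem_ker, hpa, hx]
  exact x''.2

/-- The underlying function of the connecting map. -/
noncomputable def deltaAux {a b : AddMonoid.End M} (a' b' : AddMonoid.End M')
    {a'' : AddMonoid.End M''} {f : M' →+ M} {p : M →+ M''}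
    (hf : Function.Injective f) (hp : Function.Surjective p)
    (hexact : f.range = p.ker)
    (hfb : ∀ x, f (b' x) = b (f x)) (hpa : ∀ x, p (a x) = a'' (p x))
    (hba : ∀ x, b (a x) = 0)
    (x'' : (a'' : M'' →+ M'').ker) : Hq b' a' :=
  QuotientAddGroup.mk
    ⟨(delta_lift_mem hexact hpa x'' (surjInv_eq hp (x'' : M''))).choose,
      delta_mem_ker hf hfb hba
        (delta_lift_mem hexact hpa x'' (surjInv_eq hp (x'' : M''))).choose_spec⟩

/-- The connecting map does not depend on choices. -/
lemma deltaAux_spec {a b : AddMonoid.End M} (a' b' : AddMonoid.End M')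
    {a'' : AddMonoid.End M''} {f : M' →+ M} {p : M →+ M''}
    (hf : Function.Injective f) (hp : Function.Surjective p)
    (hexact : f.range = p.ker)
    (hfa : ∀ x, f (a' x) = a (f x)) (hfb : ∀ x, f (b' x) = b (f x))
    (hpa : ∀ x, p (a x) = a'' (p x)) (hba : ∀ x, b (a x) = 0)
    (x'' : (a'' : M'' →+ M'').ker) (x : M) (y' : M')
    (hx : p x = (x'' : M'')) (hy : f y' = a x) :
    deltaAux a' b' hf hp hexact hfb hpa hba x''
      = QuotientAddGroup.mk ⟨y', delta_mem_ker hf hfb hba hy⟩ := by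
  set x₀ := surjInv hp (x'' : M'') with hx₀def
  have hx₀ : p x₀ = (x'' : M'') := surjInv_eq hp _
  have hy₀ : f (delta_lift_mem hexact hpa x'' hx₀).choose = a x₀ :=
    (delta_lift_mem hexact hpa x'' hx₀).choose_spec
  set y₀ := (delta_lift_mem hexact hpa x'' hx₀).choose
  have hxx : x - x₀ ∈ f.range := by
    rw [hexact, AddMonoidHom.mem_ker, map_sub, hx, hx₀, sub_self]
  obtain ⟨z, hz⟩ := hxx
  have hdiff : y' - y₀ = a' z := by
    apply hf
    rw [hfa, hz, map_sub, map_sub, hy, hy₀]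
  unfold deltaAux
  rw [QuotientAddGroup.eq, AddSubgroup.mem_addSubgroupOf]
  refine ⟨z, ?_⟩
  show a' z = ((-⟨y₀, _⟩ + ⟨y', _⟩ : (b' : M' →+ M').ker) : M')
  rw [← hdiff]
  push_cast
  rw [neg_add_eq_sub]

/-- The connecting homomorphism `Hq a'' b'' →+ Hq b' a'`. -/
noncomputable def deltaHom {a b : AddMonoid.End M} (a' b' : AddMonoid.End M')
    (a'' b'' : AddMonoid.End M'') {f : M' →+ M} {p : M →+ M''}
    (hf : Function.Injective f) (hp : Function.Surjective p)
    (hexact : f.range = p.ker)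
    (hfa : ∀ x, f (a' x) = a (f x)) (hfb : ∀ x, f (b' x) = b (f x))
    (hpa : ∀ x, p (a x) = a'' (p x)) (hpb : ∀ x, p (b x) = b'' (p x))
    (hab : ∀ x, a (b x) = 0) (hba : ∀ x, b (a x) = 0) :
    Hq a'' b'' →+ Hq b' a' :=
  QuotientAddGroup.lift _
    (AddMonoidHom.mk' (deltaAux a' b' hf hp hexact hfb hpa hba) (by
      intro x'' y''
      -- canonical data for x'' and y''
      have hx1 : p (surjInv hp (x'' : M'')) = (x'' : M'') := surjInv_eq hp _
      have hy1 : p (surjInv hp (y'' : M'')) = (y'' : M'') := surjInv_eq hp _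
      have hcx := (delta_lift_mem hexact hpa x'' hx1).choose_spec
      have hcy := (delta_lift_mem hexact hpa y'' hy1).choose_spec
      have hsum : p (surjInv hp (x'' : M'') + surjInv hp (y'' : M''))
          = ((x'' + y'' : (a'' : M'' →+ M'').ker) : M'') := by
        rw [map_add, hx1, hy1]; rfl
      have hfsum : f ((delta_lift_mem hexact hpa x'' hx1).choose
            + (delta_lift_mem hexact hpa y'' hy1).choose)
          = a (surjInv hp (x'' : M'') + surjInv hp (y'' : M'')) := by
        rw [map_add, map_add, hcx, hcy]
      rw [deltaAux_spec a' b' hf hp hexact hfa hfb hpa hba (x'' + y'') _ _ hsum hfsum,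
        deltaAux_spec a' b' hf hp hexact hfa hfb hpa hba x'' _ _ hx1 hcx,
        deltaAux_spec a' b' hf hp hexact hfa hfb hpa hba y'' _ _ hy1 hcy]
      rfl))
    (by
      rintro ⟨x'', hx''⟩ hmem
      rw [AddSubgroup.mem_addSubgroupOf] at hmem
      obtain ⟨w'', hw''⟩ := hmem
      obtain ⟨w, hw⟩ := hp w''
      have hx : p (b w) = ((⟨x'', hx''⟩ : (a'' : M'' →+ M'').ker) : M'') := by
        rw [hpb, hw]; exact hw''
      have hy : f (0 : M') = a (b w) := by rw [map_zero, hab]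
      rw [AddMonoidHom.mem_ker, AddMonoidHom.mk'_apply,
        deltaAux_spec a' b' hf hp hexact hfa hfb hpa hba _ _ _ hx hy]
      have : (⟨(0 : M'), delta_mem_ker hf hfb hba hy⟩ : (b' : M' →+ M').ker) = 0 :=
        Subtype.ext rfl
      rw [this, QuotientAddGroup.mk_zero])

lemma deltaHom_mk {a b : AddMonoid.End M} (a' b' : AddMonoid.End M')
    (a'' b'' : AddMonoid.End M'') {f : M' →+ M} {p : M →+ M''}
    (hf : Function.Injective f) (hp : Function.Surjective p)
    (hexact : f.range = p.ker)
    (hfa : ∀ x, f (a' x) = a (f x)) (hfb : ∀ x, f (b' x) = b (f x))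
    (hpa : ∀ x, p (a x) = a'' (p x)) (hpb : ∀ x, p (b x) = b'' (p x))
    (hab : ∀ x, a (b x) = 0) (hba : ∀ x, b (a x) = 0)
    (x'' : (a'' : M'' →+ M'').ker) (x : M) (y' : M')
    (hx : p x = (x'' : M'')) (hy : f y' = a x) :
    deltaHom a' b' a'' b'' hf hp hexact hfa hfb hpa hpb hab hba (QuotientAddGroup.mk x'')
      = QuotientAddGroup.mk ⟨y', delta_mem_ker hf hfb hba hy⟩ := by
  show deltaAux a' b' hf hp hexact hfb hpa hba x'' = _
  exact deltaAux_spec a' b' hf hp hexact hfa hfb hpa hba x'' x y' hx hy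

variable {a b : AddMonoid.End M} {a' b' : AddMonoid.End M'} {a'' b'' : AddMonoid.End M''}
  {f : M' →+ M} {p : M →+ M''}

lemma exact_one
    (hf : Function.Injective f) (hp : Function.Surjective p)
    (hexact : f.range = p.ker)
    (hfa : ∀ x, f (a' x) = a (f x)) (hfb : ∀ x, f (b' x) = b (f x))
    (hpa : ∀ x, p (a x) = a'' (p x)) (hpb : ∀ x, p (b x) = b'' (p x))
    (hab : ∀ x, a (b x) = 0) (hba : ∀ x, b (a x) = 0) :
    (HqMap a' b' a b f hfa hfb).range = (HqMap a b a'' b'' p hpa hpb).ker := by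
  ext q
  refine QuotientAddGroup.induction_on q fun x => ?_
  constructor
  · rintro ⟨q', hq'⟩
    rw [AddMonoidHom.mem_ker, ← hq']
    clear hq'
    refine QuotientAddGroup.induction_on q' fun y' => ?_
    rw [HqMap_mk, HqMap_mk, QuotientAddGroup.eq_zero_iff,
      AddSubgroup.mem_addSubgroupOf]
    have : p (f (y' : M')) = 0 := by
      rw [← AddMonoidHom.mem_ker, ← hexact]; exact ⟨y', rfl⟩
    show p (f (y' : M')) ∈ b''.range
    rw [this]
    exact zero_mem _
  · intro hq
    rw [AddMonoidHom.mem_ker, HqMap_mk, QuotientAddGroup.eq_zero_iff,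
      AddSubgroup.mem_addSubgroupOf] at hq
    obtain ⟨w'', hw''⟩ := hq
    obtain ⟨w, hw⟩ := hp w''
    have hmem : (x : M) - b w ∈ f.range := by
      rw [hexact, AddMonoidHom.mem_ker, map_sub, hpb, hw]; exact sub_eq_zero.mpr hw''.symm
    obtain ⟨y', hy'⟩ := hmem
    have hx : a (x : M) = 0 := x.2
    have ha'y' : a' y' = 0 := by
      apply hf
      rw [hfa, hy', map_sub, hx, map_zero, hab, sub_self]
    refine ⟨QuotientAddGroup.mk ⟨y', ha'y'⟩, ?_⟩
    rw [HqMap_mk, QuotientAddGroup.eq, AddSubgroup.mem_addSubgroupOf]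
    refine ⟨w, ?_⟩
    show b w = -(f y') + (x : M)
    rw [hy', neg_sub, sub_add_cancel]

lemma exact_two
    (hf : Function.Injective f) (hp : Function.Surjective p)
    (hexact : f.range = p.ker)
    (hfa : ∀ x, f (a' x) = a (f x)) (hfb : ∀ x, f (b' x) = b (f x))
    (hpa : ∀ x, p (a x) = a'' (p x)) (hpb : ∀ x, p (b x) = b'' (p x))
    (hab : ∀ x, a (b x) = 0) (hba : ∀ x, b (a x) = 0) :
    (HqMap a b a'' b'' p hpa hpb).range
      = (deltaHom a' b' a'' b'' hf hp hexact hfa hfb hpa hpb hab hba).ker := by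
  ext q
  refine QuotientAddGroup.induction_on q fun x'' => ?_
  constructor
  · rintro ⟨q', hq'⟩
    rw [AddMonoidHom.mem_ker, ← hq']
    clear hq'
    refine QuotientAddGroup.induction_on q' fun x => ?_
    rw [HqMap_mk]
    have hx : a (x : M) = 0 := x.2
    have hy : f (0 : M') = a (x : M) := by rw [map_zero, hx]
    rw [deltaHom_mk a' b' a'' b'' hf hp hexact hfa hfb hpa hpb hab hba _ (x : M) 0 rfl hy]
    have : (⟨(0 : M'), delta_mem_ker hf hfb hba hy⟩ : (b' : M' →+ M').ker) = 0 :=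
      Subtype.ext rfl
    rw [this, QuotientAddGroup.mk_zero]
  · intro hq
    rw [AddMonoidHom.mem_ker] at hq
    -- canonical data
    have hx₀ : p (surjInv hp (x'' : M'')) = (x'' : M'') := surjInv_eq hp _
    have hy₀ := (delta_lift_mem hexact hpa x'' hx₀).choose_spec
    rw [deltaHom_mk a' b' a'' b'' hf hp hexact hfa hfb hpa hpb hab hba x'' _ _ hx₀ hy₀,
      QuotientAddGroup.eq_zero_iff, AddSubgroup.mem_addSubgroupOf] at hq
    obtain ⟨z, hz⟩ := hq
    set x₀ := surjInv hp (x'' : M'')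
    set y₀ := (delta_lift_mem hexact hpa x'' hx₀).choose
    have hza : (a' z : M') = y₀ := hz
    have hx₁a : a (x₀ - f z) = 0 := by
      rw [map_sub, ← hy₀, ← hfa, hza, sub_self]
    have hx₁p : p (x₀ - f z) = (x'' : M'') := by
      have : p (f z) = 0 := by
        rw [← AddMonoidHom.mem_ker, ← hexact]; exact ⟨z, rfl⟩
      rw [map_sub, this, sub_zero, hx₀]
    refine ⟨QuotientAddGroup.mk ⟨x₀ - f z, hx₁a⟩, ?_⟩
    rw [HqMap_mk]
    congr 1
    exact Subtype.ext hx₁p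

lemma exact_three
    (hf : Function.Injective f) (hp : Function.Surjective p)
    (hexact : f.range = p.ker)
    (hfa : ∀ x, f (a' x) = a (f x)) (hfb : ∀ x, f (b' x) = b (f x))
    (hpa : ∀ x, p (a x) = a'' (p x)) (hpb : ∀ x, p (b x) = b'' (p x))
    (hab : ∀ x, a (b x) = 0) (hba : ∀ x, b (a x) = 0) :
    (deltaHom a' b' a'' b'' hf hp hexact hfa hfb hpa hpb hab hba).range
      = (HqMap b' a' b a f hfb hfa).ker := by
  ext q
  refine QuotientAddGroup.induction_on q fun y' => ?_
  constructor
  · rintro ⟨q'', hq''⟩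
    rw [AddMonoidHom.mem_ker, ← hq'']
    clear hq''
    refine QuotientAddGroup.induction_on q'' fun x'' => ?_
    have hx₀ : p (surjInv hp (x'' : M'')) = (x'' : M'') := surjInv_eq hp _
    have hy₀ := (delta_lift_mem hexact hpa x'' hx₀).choose_spec
    rw [deltaHom_mk a' b' a'' b'' hf hp hexact hfa hfb hpa hpb hab hba x'' _ _ hx₀ hy₀,
      HqMap_mk, QuotientAddGroup.eq_zero_iff, AddSubgroup.mem_addSubgroupOf]
    exact ⟨surjInv hp (x'' : M''), hy₀.symm⟩
  · intro hq
    rw [AddMonoidHom.mem_ker, HqMap_mk, QuotientAddGroup.eq_zero_iff,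
      AddSubgroup.mem_addSubgroupOf] at hq
    obtain ⟨x, hx⟩ := hq
    have hax : f (y' : M') = a x := hx.symm
    have hx'' : a'' (p x) = 0 := by
      rw [← hpa, ← hax, ← AddMonoidHom.mem_ker, ← hexact]
      exact ⟨(y' : M'), rfl⟩
    refine ⟨QuotientAddGroup.mk ⟨p x, hx''⟩, ?_⟩
    rw [deltaHom_mk a' b' a'' b'' hf hp hexact hfa hfb hpa hpb hab hba _ x (y' : M') rfl hax]

end Connecting

end Hex

section Counting

lemma card_eq_range_mul_ker {X Y : Type*} [AddCommGroup X] [AddCommGroup Y] (φ : X →+ Y) :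
    Nat.card X = Nat.card φ.range * Nat.card φ.ker := by
  rw [AddSubgroup.card_eq_card_quotient_mul_card_addSubgroup φ.ker]
  congr 1
  exact Nat.card_congr (QuotientAddGroup.quotientKerEquivRange φ).toEquiv

end Counting

section MainAux

variable {M₁ M₂ : Type*} [AddCommGroup M₁] [AddCommGroup M₂]

lemma pow_compat (σ₁ : AddMonoid.End M₁) (σ₂ : AddMonoid.End M₂) (g : M₁ →+ M₂)
    (h : ∀ x, g (σ₁ x) = σ₂ (g x)) (i : ℕ) (x : M₁) :
    g ((σ₁ ^ i) x) = (σ₂ ^ i) (g x) := by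
  induction i generalizing x with
  | zero => simp [pow_zero]
  | succ k ih =>
      rw [pow_succ, pow_succ]
      show g ((σ₁ ^ k) (σ₁ x)) = (σ₂ ^ k) (σ₂ (g x))
      rw [ih (σ₁ x), h x]

lemma sub_one_compat (σ₁ : AddMonoid.End M₁) (σ₂ : AddMonoid.End M₂) (g : M₁ →+ M₂)
    (h : ∀ x, g (σ₁ x) = σ₂ (g x)) (x : M₁) :
    g ((1 - σ₁) x) = (1 - σ₂) (g x) := by
  show g (x - σ₁ x) = g x - σ₂ (g x)
  rw [map_sub, h]

lemma norm_compat (n : ℕ) (σ₁ : AddMonoid.End M₁) (σ₂ : AddMonoid.End M₂) (g : M₁ →+ M₂)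
    (h : ∀ x, g (σ₁ x) = σ₂ (g x)) (x : M₁) :
    g (normMap n σ₁ x) = normMap n σ₂ (g x) := by
  unfold normMap
  erw [AddMonoidHom.finset_sum_apply, AddMonoidHom.finset_sum_apply, map_sum]
  exact Finset.sum_congr rfl fun i _ => pow_compat σ₁ σ₂ g h i x

lemma sub_one_norm_zero {M : Type*} [AddCommGroup M] (n : ℕ) (σ : AddMonoid.End M)
    (hσ : σ ^ n = 1) (x : M) : (1 - σ) (normMap n σ x) = 0 := by
  have h : ((1 - σ) * normMap n σ) = 0 := by
    have := mul_geom_sum σ n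
    unfold normMap
    have h2 : (1 - σ) = -(σ - 1) := (neg_sub σ 1).symm
    rw [h2, neg_mul, this, hσ, sub_self, neg_zero]
  calc (1 - σ) (normMap n σ x) = ((1 - σ) * normMap n σ) x := rfl
    _ = 0 := by rw [h]; rfl

lemma norm_sub_one_zero {M : Type*} [AddCommGroup M] (n : ℕ) (σ : AddMonoid.End M)
    (hσ : σ ^ n = 1) (x : M) : normMap n σ ((1 - σ) x) = 0 := by
  have h : (normMap n σ * (1 - σ)) = 0 := by
    have := geom_sum_mul σ n
    unfold normMap
    have h2 : (1 - σ) = -(σ - 1) := (neg_sub σ 1).symm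
    rw [h2, mul_neg, this, hσ, sub_self, neg_zero]
  calc normMap n σ ((1 - σ) x) = (normMap n σ * (1 - σ)) x := rfl
    _ = 0 := by rw [h]; rfl

end MainAux

/-- Multiplicativity of the Herbrand quotient.  Let a cyclic group of order `n` with
generator `g` act on a finitely generated free ℤ-module `M` (via `σ` with `σ ^ n = 1`),
and let `0 → M' → M → M'' → 0` be a short exact sequence of modules over this group.
If all six Tate cohomology groups are finite, then
`|Ĥ⁰(M)|·|Ĥ¹(M')|·|Ĥ¹(M'')| = |Ĥ¹(M)|·|Ĥ⁰(M')|·|Ĥ⁰(M'')|`. -/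
theorem herbrand_quotient_multiplicative
    {M' M M'' : Type*} [AddCommGroup M'] [AddCommGroup M] [AddCommGroup M'']
    [Module ℤ M] [Module.Free ℤ M] [Module.Finite ℤ M]
    (n : ℕ) (hn : 0 < n)
    (σ' : AddMonoid.End M') (σ : AddMonoid.End M) (σ'' : AddMonoid.End M'')
    (hσ' : σ' ^ n = 1) (hσ : σ ^ n = 1) (hσ'' : σ'' ^ n = 1)
    (f : M' →+ M) (p : M →+ M'')
    (hf : Function.Injective f) (hp : Function.Surjective p)
    (hexact : f.range = p.ker)
    (hfequiv : ∀ x, σ (f x) = f (σ' x)) (hpequiv : ∀ x, p (σ x) = σ'' (p x))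
    (h0' : Finite (tateH0 n σ')) (h1' : Finite (tateH1 n σ'))
    (h0 : Finite (tateH0 n σ)) (h1 : Finite (tateH1 n σ))
    (h0'' : Finite (tateH0 n σ'')) (h1'' : Finite (tateH1 n σ'')) :
    Nat.card (tateH0 n σ) * Nat.card (tateH1 n σ') * Nat.card (tateH1 n σ'') =
      Nat.card (tateH1 n σ) * Nat.card (tateH0 n σ') * Nat.card (tateH0 n σ'') := by
  classical
  have hfs : ∀ x, f (σ' x) = σ (f x) := fun x => (hfequiv x).symm
  have hfa : ∀ x, f ((1 - σ') x) = (1 - σ) (f x) := sub_one_compat σ' σ f hfs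
  have hfb : ∀ x, f (normMap n σ' x) = normMap n σ (f x) := norm_compat n σ' σ f hfs
  have hpa : ∀ x, p ((1 - σ) x) = (1 - σ'') (p x) := sub_one_compat σ σ'' p hpequiv
  have hpb : ∀ x, p (normMap n σ x) = normMap n σ'' (p x) := norm_compat n σ σ'' p hpequiv
  have hab : ∀ x : M, (1 - σ) (normMap n σ x) = 0 := sub_one_norm_zero n σ hσ
  have hba : ∀ x : M, normMap n σ ((1 - σ) x) = 0 := norm_sub_one_zero n σ hσ
  set φ0 := HqMap (1 - σ') (normMap n σ') (1 - σ) (normMap n σ) f hfa hfb with hφ0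
  set φ1 := HqMap (1 - σ) (normMap n σ) (1 - σ'') (normMap n σ'') p hpa hpb with hφ1
  set φ2 := deltaHom (1 - σ') (normMap n σ') (1 - σ'') (normMap n σ'')
    hf hp hexact hfa hfb hpa hpb hab hba with hφ2
  set φ3 := HqMap (normMap n σ') (1 - σ') (normMap n σ) (1 - σ) f hfb hfa with hφ3
  set φ4 := HqMap (normMap n σ) (1 - σ) (normMap n σ'') (1 - σ'') p hpb hpa with hφ4
  set φ5 := deltaHom (normMap n σ') (1 - σ') (normMap n σ'') (1 - σ'')
    hf hp hexact hfb hfa hpb hpa hba hab with hφ5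
  have e1 : φ1.ker = φ0.range := (exact_one hf hp hexact hfa hfb hpa hpb hab hba).symm
  have e2 : φ2.ker = φ1.range := (exact_two hf hp hexact hfa hfb hpa hpb hab hba).symm
  have e3 : φ3.ker = φ2.range := (exact_three hf hp hexact hfa hfb hpa hpb hab hba).symm
  have e4 : φ4.ker = φ3.range := (exact_one hf hp hexact hfb hfa hpb hpa hba hab).symm
  have e5 : φ5.ker = φ4.range := (exact_two hf hp hexact hfb hfa hpb hpa hba hab).symm
  have e0 : φ0.ker = φ5.range := (exact_three hf hp hexact hfb hfa hpb hpa hba hab).symm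
  have c0 := card_eq_range_mul_ker φ0
  have c1 := card_eq_range_mul_ker φ1
  have c2 := card_eq_range_mul_ker φ2
  have c3 := card_eq_range_mul_ker φ3
  have c4 := card_eq_range_mul_ker φ4
  have c5 := card_eq_range_mul_ker φ5
  rw [e0] at c0
  rw [e1] at c1
  rw [e2] at c2
  rw [e3] at c3
  rw [e4] at c4
  rw [e5] at c5
  show Nat.card (Hq (1 - σ) (normMap n σ)) * Nat.card (Hq (normMap n σ') (1 - σ'))
      * Nat.card (Hq (normMap n σ'') (1 - σ''))
    = Nat.card (Hq (normMap n σ) (1 - σ)) * Nat.card (Hq (1 - σ') (normMap n σ'))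
      * Nat.card (Hq (1 - σ'') (normMap n σ''))
  rw [c1, c3, c5, c4, c0, c2]
  ring
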